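/- Let R be a finite commutative principal ideal ring and G a finite group. If (C, D) is a linear complementary pair of two-sided ideals in R[G] (i.e., C ⊕ D = R[G]), then C and D^⊥ are permutation equivalent: there exists a permutation σ of the elements of G-indexed coordinates such that applying σ to coordinates maps D^⊥ onto C. In particular, the minimum Hamming distances satisfy d(C) = d(D^⊥). -/

import Mathlib

open Finsupp

section Aux

variable {R : Type*} [CommRing R] {G : Type*} [Group G] [Fintype G]

/-- Inversion on the group, as a permutation. -/
private def invPerm (G : Type*) [Group G] : Equiv.Perm G :=
  ⟨fun g => g⁻¹, fun g => g⁻¹, fun g => inv_inv g, fun g => inv_inv g⟩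

omit [Fintype G] in
private lemma invPerm_apply (g : G) : invPerm G g = g⁻¹ := rfl

omit [Fintype G] in
private lemma invPerm_symm_apply (g : G) : (invPerm G).symm g = g⁻¹ := rfl

/-- Reindexing a group-algebra element by inversion. -/
private def tau (y : MonoidAlgebra R G) : MonoidAlgebra R G :=
  MonoidAlgebra.ofCoeff (Finsupp.equivMapDomain (invPerm G) y.coeff)

omit [Fintype G] in
private lemma tau_eq (y : MonoidAlgebra R G) :
    tau y = MonoidAlgebra.ofCoeff (Finsupp.equivMapDomain (invPerm G) y.coeff) := rfl

omit [Fintype G] in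
private lemma tau_apply (y : MonoidAlgebra R G) (g : G) : (tau y).coeff g = y.coeff g⁻¹ := rfl

omit [Fintype G] in
private lemma tau_tau (y : MonoidAlgebra R G) : tau (tau y) = y := by
  ext g; rw [tau_apply, tau_apply, inv_inv]

omit [Fintype G] in
private lemma tau_ne_zero {y : MonoidAlgebra R G} (hy : y ≠ 0) : tau y ≠ 0 := by
  intro h
  apply hy
  have := congrArg tau h
  rw [tau_tau] at this
  rw [this]
  ext g; rw [tau_apply]; rfl

omit [Fintype G] in
private lemma tau_support_card (y : MonoidAlgebra R G) :
    (tau y).coeff.support.card = y.coeff.support.card := by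
  have : (tau y).coeff.support = y.coeff.support.map (invPerm G).toEmbedding := by
    ext g
    simp only [Finsupp.mem_support_iff, Finset.mem_map_equiv, tau_apply,
      invPerm_symm_apply]
  rw [this, Finset.card_map]

private lemma key_form (x y : MonoidAlgebra R G) :
    ∑ g : G, x.coeff g * y.coeff g = (x * tau y).coeff 1 := by
  classical
  have hs : ∀ {p : G × G},
      p ∈ Finset.univ.map ⟨fun g : G => (g, g⁻¹), show Function.Injective (fun g : G => (g, g⁻¹)) from fun a b h => by
        simpa using congrArg Prod.fst h⟩ ↔ p.1 * p.2 = 1 := by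
    intro p
    simp only [Finset.mem_map, Finset.mem_univ, true_and, Function.Embedding.coeFn_mk]
    constructor
    · rintro ⟨g, rfl⟩; simp
    · intro h
      refine ⟨p.1, ?_⟩
      have : p.2 = p.1⁻¹ := (inv_eq_of_mul_eq_one_right h).symm
      rw [← this]
  rw [MonoidAlgebra.mul_apply_antidiagonal x (tau y) 1 _ hs, Finset.sum_map]
  refine Finset.sum_congr rfl fun g _ => ?_
  simp only [Function.Embedding.coeFn_mk, tau_apply, inv_inv]

end Aux

/-- Let `R` be a finite commutative principal ideal ring and `G` a finite
group.  If `(C, D)` is a linear complementary pair of two-sided ideals in `R[G]`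
(`C ∩ D = 0` and `C + D = R[G]`), then `C` and `D^⊥` are permutation equivalent: some
permutation `σ` of the `G`-indexed coordinates maps `D^⊥` onto `C`.  In particular the
minimum Hamming distances of `C` and `D^⊥` coincide. -/
theorem lcp_perm_equiv {R : Type*} [CommRing R] [Fintype R] [IsPrincipalIdealRing R]
    (G : Type*) [Group G] [Fintype G]
    (C D : TwoSidedIdeal (MonoidAlgebra R G))
    (hinter : ∀ x, x ∈ C → x ∈ D → x = 0)
    (hsum : ∀ x : MonoidAlgebra R G, ∃ c ∈ C, ∃ d ∈ D, x = c + d) :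
    ∃ σ : Equiv.Perm G,
      (fun y : MonoidAlgebra R G => MonoidAlgebra.ofCoeff (Finsupp.equivMapDomain σ y.coeff)) ''
          {y : MonoidAlgebra R G | ∀ x ∈ D, ∑ g : G, x.coeff g * y.coeff g = 0} =
        (C : Set (MonoidAlgebra R G)) ∧
      sInf {n : ℕ | ∃ x ∈ C, x ≠ 0 ∧ x.coeff.support.card = n} =
        sInf {n : ℕ | ∃ y : MonoidAlgebra R G,
          (∀ x ∈ D, ∑ g : G, x.coeff g * y.coeff g = 0) ∧ y ≠ 0 ∧ y.coeff.support.card = n} := by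
  classical
  obtain ⟨e, he, f, hf, hef⟩ := hsum 1
  have hDC : ∀ d ∈ D, ∀ c ∈ C, d * c = 0 := fun d hd c hc =>
    hinter _ (C.mul_mem_left _ _ hc) (D.mul_mem_right _ _ hd)
  -- the key membership characterization of the dual code
  have hkey : ∀ y : MonoidAlgebra R G,
      (∀ x ∈ D, ∑ g : G, x.coeff g * y.coeff g = 0) ↔ tau y ∈ C := by
    intro y
    constructor
    · intro hy
      have hfy : f * tau y = 0 := by
        ext h
        have hx : (MonoidAlgebra.single h⁻¹ (1 : R)) * f ∈ D := D.mul_mem_left _ _ hf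
        have h2 := hy _ hx
        rw [key_form, mul_assoc, MonoidAlgebra.coeff_single_mul_apply] at h2
        simpa using h2
      have h3 : tau y = e * tau y := by
        have h1 : (1 : MonoidAlgebra R G) * tau y = (e + f) * tau y := by rw [← hef]
        rwa [one_mul, add_mul, hfy, add_zero] at h1
      rw [h3]
      exact C.mul_mem_right _ _ he
    · intro hy x hx
      rw [key_form, hDC x hx _ hy]
      rfl
  refine ⟨invPerm G, ?_, ?_⟩
  · ext c
    simp only [Set.mem_image, Set.mem_setOf_eq, SetLike.mem_coe]
    constructor
    · rintro ⟨y, hy, rfl⟩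
      exact (hkey y).1 hy
    · intro hc
      exact ⟨tau c, (hkey (tau c)).2 (by rw [tau_tau]; exact hc), tau_tau c⟩
  · congr 1
    ext n
    simp only [Set.mem_setOf_eq]
    constructor
    · rintro ⟨x, hx, hx0, hxc⟩
      exact ⟨tau x, (hkey (tau x)).2 (by rw [tau_tau]; exact hx), tau_ne_zero hx0,
        by rw [tau_support_card, hxc]⟩
    · rintro ⟨y, hy, hy0, hyc⟩
      exact ⟨tau y, (hkey y).1 hy, tau_ne_zero hy0, by rw [tau_support_card, hyc]⟩
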